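/- Let F ⊆ ℝ³ be a compact set such that for every x ∈ [a,b] the boundary section (∂F)_x = {(y,z) : (x,y,z) ∈ ∂F} has 2-dimensional outer Jordan content zero, and F ⊆ [a,b] × ℝ². Then F is Jordan measurable and its volume equals ∫_a^b c₂(F_x) dx, where c₂(F_x) is the 2-dimensional Jordan content of the section F_x = {(y,z) : (x,y,z) ∈ F}. -/
import Mathlib


open MeasureTheory

/-- Peano's Cavalieri formula for volumes (1887, p. 221): if every section of
the boundary of a compact set `F ⊆ [a,b] × ℝ²` perpendicular to the `x`-axis is
a planar null set, then `F` is Jordan measurable and its volume is the integral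
of the areas of its sections. -/
theorem cavalieri_volume_formula (a b : ℝ) (hab : a ≤ b) (F : Set (ℝ × ℝ × ℝ))
    (hFc : IsCompact F) (hFsub : ∀ p ∈ F, p.1 ∈ Set.Icc a b)
    (hsec : ∀ x ∈ Set.Icc a b,
      volume {q : ℝ × ℝ | (x, q.1, q.2) ∈ frontier F} = 0) :
    volume (frontier F) = 0 ∧
      volume F = ENNReal.ofReal
        (∫ x in a..b, (volume {q : ℝ × ℝ | (x, q.1, q.2) ∈ F}).toReal) := by
  have hFcl : IsClosed F := hFc.isClosed
  have hFm : MeasurableSet F := hFcl.measurableSet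
  have hfr : frontier F ⊆ F := by
    rw [hFcl.frontier_eq]; exact Set.diff_subset
  have hfrm : MeasurableSet (frontier F) := isClosed_frontier.measurableSet
  set g : ℝ → ENNReal := fun x => volume (Prod.mk x ⁻¹' F) with hg
  -- Part 1
  have hzero : ∀ x, volume (Prod.mk x ⁻¹' frontier F) = 0 := by
    intro x
    by_cases hx : x ∈ Set.Icc a b
    · exact hsec x hx
    · have : Prod.mk x ⁻¹' frontier F = ∅ := by
        ext q
        simp only [Set.mem_preimage, Set.mem_empty_iff_false, iff_false]
        intro h
        exact hx (hFsub _ (hfr h))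
      simp [this]
  have h1 : volume (frontier F) = 0 := by
    rw [Measure.volume_eq_prod, Measure.prod_apply hfrm]
    simp [hzero]
  refine ⟨h1, ?_⟩
  -- Part 2
  have hvol : volume F ≠ ⊤ := hFc.measure_lt_top.ne
  have hmeas : Measurable g := measurable_measure_prodMk_left hFm
  have hprod : volume F = ∫⁻ x, g x := by
    rw [Measure.volume_eq_prod, Measure.prod_apply hFm]
  have hout : ∀ x, x ∉ Set.Icc a b → g x = 0 := by
    intro x hx
    have : Prod.mk x ⁻¹' F = ∅ := by
      ext q
      simp only [Set.mem_preimage, Set.mem_empty_iff_false, iff_false]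
      exact fun h => hx (hFsub _ h)
    simp [hg, this]
  have hind : (∫⁻ x, g x) = ∫⁻ x in Set.Ioc a b, g x := by
    have : g = Set.indicator (Set.Icc a b) g := by
      funext x
      by_cases hx : x ∈ Set.Icc a b
      · simp [Set.indicator_of_mem hx]
      · simp [Set.indicator_of_notMem hx, hout x hx]
    conv_lhs => rw [this]
    rw [lintegral_indicator measurableSet_Icc g]
    exact (setLIntegral_congr Ioc_ae_eq_Icc).symm
  have hfin : (∫⁻ x in Set.Ioc a b, g x) ≠ ⊤ := by
    refine ne_top_of_le_ne_top (hprod ▸ hvol) ?_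
    exact lintegral_mono' Measure.restrict_le_self le_rfl
  have hlt : ∀ᵐ x ∂volume, g x < ⊤ := ae_lt_top hmeas (hprod ▸ hvol)
  have key : ENNReal.ofReal (∫ x in Set.Ioc a b, (g x).toReal) =
      ∫⁻ x in Set.Ioc a b, g x := by
    rw [integral_toReal hmeas.aemeasurable (ae_restrict_of_ae hlt)]
    exact ENNReal.ofReal_toReal hfin
  have hint : (∫ x in a..b, (volume {q : ℝ × ℝ | (x, q.1, q.2) ∈ F}).toReal)
      = ∫ x in Set.Ioc a b, (g x).toReal := by
    rw [intervalIntegral.integral_of_le hab]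
    rfl
  rw [hint, key, hprod, hind]
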